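/- arXiv:1302.4788 — 3 statements merged into one kernel-verified Lean document; each statement's English description precedes it below -/
import Mathlib

section
/- For every real α ∈ (0,1) and integer K ≥ 2, define Ψ(K,α) = ∑_{i=0}^{K-1} (1/(K-i)) · ∏_{j=1}^{i} (1 - α/j)/(1 + α/(K-j)). Then Ψ(K,α) = Γ(α)·(K-1)!/Γ(K+α) - Γ(α)·Γ(K+1-α)/(K·Γ(1-α)·Γ(K+α)). -/
set_option maxHeartbeats 1600000

open Finset Real

private lemma gamma_prod_sub (α : ℝ) (hα1 : α < 1) (i : ℕ) :
    Real.Gamma ((i : ℝ) + 1 - α) = (∏ j ∈ Icc 1 i, ((j : ℝ) - α)) * Real.Gamma (1 - α) := by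
  induction i with
  | zero => norm_num
  | succ n ih =>
      rw [Finset.prod_Icc_succ_top (Nat.le_add_left 1 n)]
      have hne : (n : ℝ) + 1 - α ≠ 0 := by
        have : (0:ℝ) < (n:ℝ) + 1 - α := by
          have : (0:ℝ) ≤ (n:ℝ) := Nat.cast_nonneg n
          linarith
        linarith
      have h1 : ((n+1 : ℕ) : ℝ) + 1 - α = ((n : ℝ) + 1 - α) + 1 := by push_cast; ring
      rw [h1, Real.Gamma_add_one hne, ih]
      push_cast
      ring

private lemma gamma_prod_add (α : ℝ) (hα0 : 0 < α) (K : ℕ) :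
    ∀ i : ℕ, i ≤ K →
      Real.Gamma ((K : ℝ) + α) =
        (∏ j ∈ Icc 1 i, ((K : ℝ) - (j : ℝ) + α)) * Real.Gamma ((K : ℝ) - (i : ℝ) + α) := by
  intro i
  induction i with
  | zero => intro _; norm_num
  | succ n ih =>
      intro hn
      have hn' : n ≤ K := Nat.le_of_succ_le hn
      rw [Finset.prod_Icc_succ_top (Nat.le_add_left 1 n)]
      have hpos : (0:ℝ) < (K : ℝ) - ((n+1 : ℕ) : ℝ) + α := by
        have : ((n+1 : ℕ) : ℝ) ≤ (K : ℝ) := by exact_mod_cast hn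
        linarith
      have hne : (K : ℝ) - ((n+1 : ℕ) : ℝ) + α ≠ 0 := ne_of_gt hpos
      have h1 : (K : ℝ) - (n : ℝ) + α = ((K : ℝ) - ((n+1 : ℕ) : ℝ) + α) + 1 := by
        push_cast; ring
      rw [ih hn', h1, Real.Gamma_add_one hne]
      push_cast
      ring

private lemma prod_K_sub (K : ℕ) :
    ∀ i : ℕ, i < K →
      (∏ j ∈ Icc 1 i, ((K : ℝ) - (j : ℝ))) * ((K - 1 - i).factorial : ℝ)
        = ((K - 1).factorial : ℝ) := by
  intro i
  induction i with
  | zero => intro _; norm_num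
  | succ n ih =>
      intro hn
      have hn' : n < K := Nat.lt_of_succ_lt hn
      rw [Finset.prod_Icc_succ_top (Nat.le_add_left 1 n)]
      have h1 : K - 1 - n = (K - 1 - (n+1)) + 1 := by omega
      have hsub : ((K - 1 - (n+1) : ℕ) : ℝ) = (K : ℝ) - (n : ℝ) - 2 := by
        have hnat : K - 1 - (n+1) + (n+2) = K := by omega
        have hc := congrArg (Nat.cast (R := ℝ)) hnat
        push_cast at hc
        linarith
      have hI := ih hn'
      rw [h1, Nat.factorial_succ] at hI
      push_cast at hI ⊢
      rw [hsub] at hI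
      linear_combination hI

private lemma key_sum (α : ℝ) (hα0 : 0 < α) (hα1 : α < 1) :
    ∀ K : ℕ,
      ∑ i ∈ range K, (K.choose i : ℝ) * Real.Gamma ((i : ℝ) + 1 - α)
          * Real.Gamma ((K : ℝ) - (i : ℝ) + α)
        = (K.factorial : ℝ) * Real.Gamma (1 - α) * Real.Gamma α
            - Real.Gamma ((K : ℝ) + 1 - α) * Real.Gamma α := by
  intro K
  induction K with
  | zero => norm_num
  | succ K ih =>
      set g : ℕ → ℝ := fun i =>
        Real.Gamma ((i : ℝ) + 1 - α) * Real.Gamma (((K+1 : ℕ) : ℝ) - (i : ℝ) + α) with hg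
      have hsplit :
          ∑ i ∈ range (K+1), ((K+1).choose i : ℝ) * Real.Gamma ((i : ℝ) + 1 - α)
              * Real.Gamma (((K+1 : ℕ) : ℝ) - (i : ℝ) + α)
            = ∑ i ∈ range K, (K.choose i : ℝ) * (g i + g (i+1)) + g K := by
        have e1 : ∑ i ∈ range (K+1), ((K+1).choose i : ℝ) * Real.Gamma ((i : ℝ) + 1 - α)
              * Real.Gamma (((K+1 : ℕ) : ℝ) - (i : ℝ) + α)
            = ∑ i ∈ range (K+1), ((K+1).choose i : ℝ) * g i := by
          apply Finset.sum_congr rfl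
          intro i _
          simp only [hg]; ring
        rw [e1, Finset.sum_range_succ' (fun i => ((K+1).choose i : ℝ) * g i)]
        have e2 : ∀ i, ((K+1).choose (i+1) : ℝ) = (K.choose i : ℝ) + (K.choose (i+1) : ℝ) := by
          intro i
          rw [Nat.choose_succ_succ]
          push_cast; ring
        simp only [e2, add_mul]
        rw [Finset.sum_add_distrib]
        have e3 : ∑ i ∈ range K, (K.choose (i+1) : ℝ) * g (i+1)
            = ∑ i ∈ range (K+1), (K.choose i : ℝ) * g i - (K.choose 0 : ℝ) * g 0 := by
          rw [Finset.sum_range_succ' (fun i => (K.choose i : ℝ) * g i)]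
          ring
        rw [e3, Finset.sum_range_succ (fun i => (K.choose i : ℝ) * g i)]
        simp only [Nat.choose_zero_right, Nat.choose_self, Nat.cast_one]
        have e4 : ∑ i ∈ range K, ((K.choose i : ℝ) * g (i+1) + (K.choose i : ℝ) * g i)
            = ∑ i ∈ range K, (K.choose i : ℝ) * (g i + g (i+1)) := by
          apply Finset.sum_congr rfl; intro i _; ring
        rw [← e4, Finset.sum_add_distrib]
        ring
      have hpoint : ∀ i ∈ range K, (K.choose i : ℝ) * (g i + g (i+1))
          = ((K:ℝ)+1) * ((K.choose i : ℝ) * Real.Gamma ((i : ℝ) + 1 - α)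
              * Real.Gamma ((K : ℝ) - (i : ℝ) + α)) := by
        intro i hi
        have hiK : i < K := Finset.mem_range.mp hi
        have hpos1 : (0:ℝ) < (K : ℝ) - (i : ℝ) + α := by
          have : (i : ℝ) ≤ (K : ℝ) := by exact_mod_cast hiK.le
          linarith
        have hpos2 : (0:ℝ) < (i : ℝ) + 1 - α := by
          have : (0:ℝ) ≤ (i:ℝ) := Nat.cast_nonneg i
          linarith
        have hg1 : g i = Real.Gamma ((i : ℝ) + 1 - α)
            * (((K : ℝ) - (i : ℝ) + α) * Real.Gamma ((K : ℝ) - (i : ℝ) + α)) := by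
          simp only [hg]
          have : ((K+1 : ℕ) : ℝ) - (i : ℝ) + α = ((K : ℝ) - (i : ℝ) + α) + 1 := by
            push_cast; ring
          rw [this, Real.Gamma_add_one (ne_of_gt hpos1)]
        have hg2 : g (i+1) = (((i : ℝ) + 1 - α) * Real.Gamma ((i : ℝ) + 1 - α))
            * Real.Gamma ((K : ℝ) - (i : ℝ) + α) := by
          simp only [hg]
          have h1 : ((i+1 : ℕ) : ℝ) + 1 - α = ((i : ℝ) + 1 - α) + 1 := by push_cast; ring
          have h2 : ((K+1 : ℕ) : ℝ) - ((i+1 : ℕ) : ℝ) + α = (K : ℝ) - (i : ℝ) + α := by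
            push_cast; ring
          rw [h1, h2, Real.Gamma_add_one (ne_of_gt hpos2)]
        rw [hg1, hg2]
        ring
      rw [hsplit, Finset.sum_congr rfl hpoint, ← Finset.mul_sum, ih]
      have hgK : g K = Real.Gamma ((K : ℝ) + 1 - α) * (α * Real.Gamma α) := by
        simp only [hg]
        have : ((K+1 : ℕ) : ℝ) - (K : ℝ) + α = α + 1 := by push_cast; ring
        rw [this, Real.Gamma_add_one (ne_of_gt hα0)]
      have hK2 : Real.Gamma (((K+1 : ℕ) : ℝ) + 1 - α)
          = ((K : ℝ) + 1 - α) * Real.Gamma ((K : ℝ) + 1 - α) := by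
        have h1 : ((K+1 : ℕ) : ℝ) + 1 - α = ((K : ℝ) + 1 - α) + 1 := by push_cast; ring
        have hpos : (0:ℝ) < (K : ℝ) + 1 - α := by
          have : (0:ℝ) ≤ (K:ℝ) := Nat.cast_nonneg K
          linarith
        rw [h1, Real.Gamma_add_one (ne_of_gt hpos)]
      rw [hgK, hK2]
      push_cast [Nat.factorial_succ]
      ring

theorem Psi_closed_form (α : ℝ) (hα0 : 0 < α) (hα1 : α < 1) (K : ℕ) (hK : 2 ≤ K) :
    ∑ i ∈ Finset.range K, (1 / ((K : ℝ) - (i : ℝ))) *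
        ∏ j ∈ Finset.Icc 1 i, ((1 - α / (j : ℝ)) / (1 + α / ((K : ℝ) - (j : ℝ)))) =
      Real.Gamma α * ((K - 1).factorial : ℝ) / Real.Gamma ((K : ℝ) + α) -
        Real.Gamma α * Real.Gamma ((K : ℝ) + 1 - α) /
          ((K : ℝ) * Real.Gamma (1 - α) * Real.Gamma ((K : ℝ) + α)) := by
  have hΓ1 : (0:ℝ) < Real.Gamma (1 - α) := Real.Gamma_pos_of_pos (by linarith)
  have hΓKα : (0:ℝ) < Real.Gamma ((K : ℝ) + α) := by
    apply Real.Gamma_pos_of_pos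
    have : (0:ℝ) ≤ (K:ℝ) := Nat.cast_nonneg K
    linarith
  have hKpos : (0:ℝ) < (K:ℝ) := by
    have : (0:ℕ) < K := by omega
    exact_mod_cast this
  -- per-term identity
  have hterm : ∀ i ∈ Finset.range K,
      (1 / ((K : ℝ) - (i : ℝ))) *
        ∏ j ∈ Finset.Icc 1 i, ((1 - α / (j : ℝ)) / (1 + α / ((K : ℝ) - (j : ℝ))))
      = ((K.choose i : ℝ) * Real.Gamma ((i : ℝ) + 1 - α)
          * Real.Gamma ((K : ℝ) - (i : ℝ) + α))
          * (1 / ((K : ℝ) * Real.Gamma (1 - α) * Real.Gamma ((K : ℝ) + α))) := by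
    intro i hi
    have hiK : i < K := Finset.mem_range.mp hi
    have hprodeq :
        ∏ j ∈ Finset.Icc 1 i, ((1 - α / (j : ℝ)) / (1 + α / ((K : ℝ) - (j : ℝ))))
          = ∏ j ∈ Finset.Icc 1 i,
              ((((j:ℝ) - α) * ((K:ℝ) - (j:ℝ))) / ((j:ℝ) * ((K:ℝ) - (j:ℝ) + α))) := by
      apply Finset.prod_congr rfl
      intro j hj
      obtain ⟨hj1, hj2⟩ := Finset.mem_Icc.mp hj
      have hjK : j < K := lt_of_le_of_lt hj2 hiK
      have hj0 : (0:ℝ) < (j:ℝ) := by exact_mod_cast hj1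
      have hKj : (0:ℝ) < (K:ℝ) - (j:ℝ) := by
        have : (j:ℝ) < (K:ℝ) := by exact_mod_cast hjK
        linarith
      have hKjα : (0:ℝ) < (K:ℝ) - (j:ℝ) + α := by linarith
      field_simp
    rw [hprodeq]
    rw [Finset.prod_div_distrib, Finset.prod_mul_distrib, Finset.prod_mul_distrib]
    have hP1 := gamma_prod_sub α hα1 i
    have hP2 := gamma_prod_add α hα0 K i hiK.le
    have hP3 := prod_K_sub K i hiK
    have hP4 : ∏ j ∈ Finset.Icc 1 i, (j:ℝ) = (i.factorial : ℝ) := by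
      rw [← Nat.cast_prod]
      norm_cast
      rw [← Finset.Ico_add_one_right_eq_Icc]
      exact Finset.prod_Ico_id_eq_factorial i
    have hchoose : (K.choose i : ℝ) * (i.factorial : ℝ) * ((K-i).factorial : ℝ)
        = (K.factorial : ℝ) := by
      exact_mod_cast congrArg (Nat.cast (R := ℝ))
        (Nat.choose_mul_factorial_mul_factorial hiK.le)
    have hfK : (K.factorial : ℝ) = (K:ℝ) * ((K-1).factorial : ℝ) := by
      have h := Nat.mul_factorial_pred (by omega : K ≠ 0)
      exact_mod_cast (congrArg (Nat.cast (R := ℝ)) h).symm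
    have hfKi : ((K-i).factorial : ℝ) = ((K:ℝ) - (i:ℝ)) * ((K-1-i).factorial : ℝ) := by
      have h1 : K - i = (K - 1 - i) + 1 := by omega
      rw [h1, Nat.factorial_succ]
      have h2 : ((K - 1 - i : ℕ) : ℝ) + 1 = (K:ℝ) - (i:ℝ) := by
        have hnat : (K - 1 - i) + 1 + i = K := by omega
        have hc := congrArg (Nat.cast (R := ℝ)) hnat
        push_cast at hc
        linarith
      push_cast
      rw [h2]
    -- nonvanishing facts
    have hKi : (0:ℝ) < (K:ℝ) - (i:ℝ) := by
      have : (i:ℝ) < (K:ℝ) := by exact_mod_cast hiK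
      linarith
    have hΓKiα : (0:ℝ) < Real.Gamma ((K : ℝ) - (i : ℝ) + α) :=
      Real.Gamma_pos_of_pos (by linarith)
    have hfact1 : (0:ℝ) < ((K-1-i).factorial : ℝ) := by exact_mod_cast Nat.factorial_pos _
    have hfact2 : (0:ℝ) < (i.factorial : ℝ) := by exact_mod_cast Nat.factorial_pos _
    rw [hP1, hP4]
    -- replace Gamma (K+α) on RHS using hP2
    rw [hP2]
    have hB : ∏ j ∈ Finset.Icc 1 i, ((K:ℝ) - (j:ℝ))
        = ((K-1).factorial : ℝ) / ((K-1-i).factorial : ℝ) := by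
      field_simp
      linarith [hP3]
    rw [hB]
    have hCh : (K.choose i : ℝ) = ((K-1).factorial : ℝ)
        / (((K:ℝ) - (i:ℝ)) * (i.factorial : ℝ) * ((K-1-i).factorial : ℝ) / (K:ℝ)) := by
      rw [hfK, hfKi] at hchoose
      field_simp
      nlinarith [hchoose]
    rw [hCh]
    have hP1pos : (0:ℝ) < ∏ j ∈ Finset.Icc 1 i, ((j:ℝ) - α) := by
      apply Finset.prod_pos
      intro j hj
      have hj1 := (Finset.mem_Icc.mp hj).1
      have : (1:ℝ) ≤ (j:ℝ) := by exact_mod_cast hj1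
      linarith
    have hP2pos : (0:ℝ) < ∏ j ∈ Finset.Icc 1 i, ((K:ℝ) - (j:ℝ) + α) := by
      apply Finset.prod_pos
      intro j hj
      obtain ⟨hj1, hj2⟩ := Finset.mem_Icc.mp hj
      have hjK : j < K := lt_of_le_of_lt hj2 hiK
      have : (j:ℝ) < (K:ℝ) := by exact_mod_cast hjK
      linarith
    have hΓi : (0:ℝ) < Real.Gamma ((i:ℝ) + 1 - α) := by
      apply Real.Gamma_pos_of_pos
      have : (0:ℝ) ≤ (i:ℝ) := Nat.cast_nonneg i
      linarith
    field_simp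
  rw [Finset.sum_congr rfl hterm, ← Finset.sum_mul, key_sum α hα0 hα1 K]
  have hfK : (K.factorial : ℝ) = (K:ℝ) * ((K-1).factorial : ℝ) := by
    have h := Nat.mul_factorial_pred (by omega : K ≠ 0)
    exact_mod_cast (congrArg (Nat.cast (R := ℝ)) h).symm
  rw [hfK]
  field_simp
end

section
/- For every real α ∈ (0,1) and integer K ≥ 2, the quantity T̄ = (1/(1-α))·[α·(Ψ(K,α) - 1/K) + ((K-α)/K)·∏_{j=1}^{K-1}(1-α/j)/(1+α/(K-j))], where Ψ(K,α) = ∑_{i=0}^{K-1} (1/(K-i))·∏_{j=1}^{i}(1-α/j)/(1+α/(K-j)), satisfies T̄ = (α/(1-α))·(Γ(α)·(K-1)!/Γ(K+α) - 1/K). -/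
open Finset

noncomputable def poch (x : ℝ) (n : ℕ) : ℝ := ∏ j ∈ Finset.range n, (x + j)

lemma poch_succ (x : ℝ) (n : ℕ) : poch x (n+1) = poch x n * (x + n) := by
  simp [poch, Finset.prod_range_succ]

lemma poch_pos {x : ℝ} (hx : 0 < x) (n : ℕ) : 0 < poch x n := by
  refine Finset.prod_pos fun j _ => ?_; positivity

lemma poch_one_eq (n : ℕ) : poch 1 n = n.factorial := by
  rw [poch, ← Finset.prod_range_add_one_eq_factorial n]
  push_cast
  exact Finset.prod_congr rfl fun j _ => by ring

lemma vand (x y : ℝ) (n : ℕ) :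
    ∑ i ∈ range (n+1), (n.choose i : ℝ) * poch x i * poch y (n-i) = poch (x+y) n := by
  induction n with
  | zero => simp [poch]
  | succ n ih =>
    have key : ∀ i ∈ range (n+1),
        (n.choose i : ℝ) * poch x (i+1) * poch y (n-i)
          + (n.choose i : ℝ) * poch x i * poch y (n+1-i)
        = (n.choose i : ℝ) * poch x i * poch y (n-i) * (x + y + n) := by
      intro i hi
      have hi' : i ≤ n := by simpa using Nat.lt_succ_iff.mp (mem_range.mp hi)
      have h2 : n+1-i = (n-i)+1 := by omega
      have h3 : ((n-i : ℕ) : ℝ) = (n:ℝ) - i := by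
        push_cast [hi']; ring
      rw [poch_succ, h2, poch_succ, h3]; ring
    have hB : ∑ i ∈ range (n+1+1), (n.choose i : ℝ) * poch x i * poch y (n+1-i)
        = ∑ i ∈ range (n+1), (n.choose (i+1) : ℝ) * poch x (i+1) * poch y (n-i)
          + poch y (n+1) := by
      rw [Finset.sum_range_succ']
      congr 1
      · refine Finset.sum_congr rfl fun i hi => ?_
        have : n+1-(i+1) = n-i := by omega
        rw [this]
      · simp [poch]
    have hB' : ∑ i ∈ range (n+1+1), (n.choose i : ℝ) * poch x i * poch y (n+1-i)
        = ∑ i ∈ range (n+1), (n.choose i : ℝ) * poch x i * poch y (n+1-i) := by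
      rw [Finset.sum_range_succ]
      have : n+1-(n+1) = 0 := by omega
      simp [this, poch]
    have hT : ∑ i ∈ range (n+2), ((n+1).choose i : ℝ) * poch x i * poch y (n+1-i)
        = ∑ i ∈ range (n+1), (n.choose i : ℝ) * poch x (i+1) * poch y (n-i)
          + (∑ i ∈ range (n+1), (n.choose (i+1) : ℝ) * poch x (i+1) * poch y (n-i)
              + poch y (n+1)) := by
      rw [Finset.sum_range_succ']
      have step : ∀ i ∈ range (n+1),
          (((n+1).choose (i+1) : ℝ)) * poch x (i+1) * poch y (n+1-(i+1))
          = (n.choose i : ℝ) * poch x (i+1) * poch y (n-i)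
            + (n.choose (i+1) : ℝ) * poch x (i+1) * poch y (n-i) := by
        intro i hi
        have h1 : (n+1).choose (i+1) = n.choose i + n.choose (i+1) := Nat.choose_succ_succ n i
        have h2 : n+1-(i+1) = n-i := by omega
        rw [h1, h2]; push_cast; ring
      rw [Finset.sum_congr rfl step, Finset.sum_add_distrib]
      simp [poch]
      ring
    rw [hT, ← hB, hB', ← Finset.sum_add_distrib]
    rw [Finset.sum_congr rfl key, ← Finset.sum_mul, ih, poch_succ]

lemma Gamma_poch {x : ℝ} (hx : 0 < x) (n : ℕ) :
    Real.Gamma (x + n) = Real.Gamma x * poch x n := by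
  induction n with
  | zero => simp [poch]
  | succ n ih =>
    have hne : x + (n:ℝ) ≠ 0 := by positivity
    have : x + ((n+1 : ℕ):ℝ) = (x + n) + 1 := by push_cast; ring
    rw [this, Real.Gamma_add_one hne, ih, poch_succ]; ring

lemma reindex (K i : ℕ) (hi : i ≤ K) (f : ℕ → ℝ) :
    ∏ j ∈ Icc 1 i, f (K - j) = ∏ m ∈ Ico (K-i) K, f m := by
  refine Finset.prod_nbij' (fun j => K - j) (fun m => K - m) ?_ ?_ ?_ ?_ ?_
  · intro j hj; simp only [mem_Icc] at hj; simp only [mem_Ico]; omega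
  · intro m hm; simp only [mem_Ico] at hm; simp only [mem_Icc]; omega
  · intro j hj; simp only [mem_Icc] at hj; show K - (K - j) = j; omega
  · intro m hm; simp only [mem_Ico] at hm; show K - (K - m) = m; omega
  · intro j hj; rfl

lemma poch_Ico (α : ℝ) (K i : ℕ) (hi : i ≤ K) :
    poch α (K-i) * ∏ m ∈ Ico (K-i) K, (α + m) = poch α K := by
  rw [poch, poch, Finset.range_eq_Ico, Finset.range_eq_Ico]
  exact Finset.prod_Ico_consecutive (fun j : ℕ => α + (j:ℝ)) (n := K - i) (Nat.zero_le _) (by omega)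

lemma fact_Ico (K i : ℕ) (hK : 1 ≤ K) (hi : i ≤ K - 1) :
    (K-1-i).factorial * ∏ m ∈ Ico (K-i) K, m = (K-1).factorial := by
  have h1 : (K-1-i).factorial = ∏ m ∈ Ico 1 (K-i), m := by
    rw [show K - i = (K-1-i)+1 by omega, Finset.prod_Ico_id_eq_factorial]
  have h2 : (K-1).factorial = ∏ m ∈ Ico 1 K, m := by
    rw [show K = (K-1)+1 by omega, Finset.prod_Ico_id_eq_factorial]; simp
  rw [h1, h2]
  exact Finset.prod_Ico_consecutive _ (by omega) (by omega)

lemma prodN (α : ℝ) (i : ℕ) :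
    (∏ j ∈ Icc 1 i, (1 - α/(j:ℝ))) * (i.factorial : ℝ) = poch (1-α) i := by
  induction i with
  | zero => simp [poch]
  | succ i ih =>
    rw [Finset.prod_Icc_succ_top (by omega : 1 ≤ i+1), poch_succ]
    have h : ((i:ℝ)+1) ≠ 0 := by positivity
    rw [← ih]
    have hf : (((i+1).factorial : ℕ) : ℝ) = ((i:ℝ)+1) * (i.factorial : ℝ) := by
      push_cast [Nat.factorial_succ]; ring
    push_cast
    push_cast at hf
    rw [hf]
    field_simp
    ring

lemma prodD (α : ℝ) (hα0 : 0 < α) (K i : ℕ) (hK : 1 ≤ K) (hi : i < K) :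
    (∏ j ∈ Icc 1 i, (1 + α/((K:ℝ) - (j:ℝ)))) * poch α (K-i) * ((K-1).factorial : ℝ)
      = poch α K * ((K-1-i).factorial : ℝ) := by
  set g : ℕ → ℝ := fun m => (α + (m:ℝ)) / (m:ℝ) with hg
  have hfac : ∀ j ∈ Icc 1 i, (1 + α/((K:ℝ) - (j:ℝ))) = g (K - j) := by
    intro j hj
    simp only [mem_Icc] at hj
    have h1 : ((K - j : ℕ) : ℝ) = (K:ℝ) - (j:ℝ) := by
      have : j ≤ K := by omega
      push_cast [this]; ring
    have h2 : (0:ℝ) < (K:ℝ) - (j:ℝ) := by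
      have : ((j:ℝ)) < (K:ℝ) := by exact_mod_cast (by omega : j < K)
      linarith
    simp only [hg, h1]
    field_simp
    ring
  rw [Finset.prod_congr rfl hfac, reindex K i (le_of_lt hi) g]
  simp only [hg]
  rw [Finset.prod_div_distrib]
  have e1 := poch_Ico α K i (le_of_lt hi)
  have e2 : ((K-1-i).factorial : ℝ) * ∏ m ∈ Ico (K-i) K, (m:ℝ) = ((K-1).factorial : ℝ) := by
    have h := fact_Ico K i hK (by omega)
    calc ((K-1-i).factorial : ℝ) * ∏ m ∈ Ico (K-i) K, (m:ℝ)
        = (((K-1-i).factorial * ∏ m ∈ Ico (K-i) K, m : ℕ) : ℝ) := by push_cast; ring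
      _ = _ := by rw [h]
  have hprodm : (∏ m ∈ Ico (K-i) K, (m:ℝ)) ≠ 0 := by
    refine ne_of_gt (Finset.prod_pos ?_)
    intro m hm; simp only [mem_Ico] at hm
    exact_mod_cast Nat.pos_of_ne_zero (by omega)
  field_simp
  calc (∏ m ∈ Ico (K-i) K, (α + (m:ℝ))) * poch α (K-i) * ((K-1).factorial : ℝ)
      = poch α K * ((K-1).factorial : ℝ) := by rw [mul_comm _ (poch α (K-i)), e1]
    _ = poch α K * (((K-1-i).factorial : ℝ) * ∏ m ∈ Ico (K-i) K, (m:ℝ)) := by rw [e2]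
    _ = poch α K * ((K-1-i).factorial : ℝ) * ∏ m ∈ Ico (K-i) K, (m:ℝ) := by ring
    _ = (∏ m ∈ Ico (K-i) K, (m:ℝ)) * poch α K * ((K-1-i).factorial : ℝ) := by ring

lemma term_eq (α : ℝ) (hα0 : 0 < α) (K i : ℕ) (hK : 2 ≤ K) (hi : i < K) :
    (1 / ((K : ℝ) - (i : ℝ))) * ∏ j ∈ Icc 1 i, ((1 - α / (j:ℝ)) / (1 + α / ((K:ℝ) - (j:ℝ))))
    = (K.choose i : ℝ) * poch (1-α) i * poch α (K-i) / ((K:ℝ) * poch α K) := by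
  have hKi : ((K:ℝ) - (i:ℝ)) = ((K-i : ℕ):ℝ) := by
    push_cast [le_of_lt hi]; ring
  have hDpos : ∀ j ∈ Icc 1 i, (0:ℝ) < (1 + α/((K:ℝ) - (j:ℝ))) := by
    intro j hj; simp only [mem_Icc] at hj
    have h2 : (0:ℝ) < (K:ℝ) - (j:ℝ) := by
      have : ((j:ℝ)) < (K:ℝ) := by exact_mod_cast (by omega : j < K)
      linarith
    positivity
  have hDne : (∏ j ∈ Icc 1 i, (1 + α/((K:ℝ) - (j:ℝ)))) ≠ 0 :=
    ne_of_gt (Finset.prod_pos hDpos)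
  have hN := prodN α i
  have hD := prodD α hα0 K i (by omega) hi
  have hpki : (0:ℝ) < poch α (K-i) := poch_pos hα0 _
  have hpk : (0:ℝ) < poch α K := poch_pos hα0 _
  have hKpos : (0:ℝ) < (K:ℝ) := by positivity
  have hc : (0:ℝ) < ((K-i : ℕ):ℝ) := by exact_mod_cast (by omega : 0 < K - i)
  have hF1 : (0:ℝ) < (i.factorial : ℝ) := by exact_mod_cast i.factorial_pos
  have hF2 : (0:ℝ) < ((K-1-i).factorial : ℝ) := by exact_mod_cast (K-1-i).factorial_pos
  have hF3 : (0:ℝ) < ((K-1).factorial : ℝ) := by exact_mod_cast (K-1).factorial_pos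
  have hnat : (K:ℝ) * ((K-1).factorial : ℝ)
      = (K.choose i : ℝ) * (i.factorial : ℝ) * ((K-i : ℕ):ℝ) * ((K-1-i).factorial : ℝ) := by
    have h1 : K.choose i * i.factorial * (K-i).factorial = K.factorial :=
      Nat.choose_mul_factorial_mul_factorial (le_of_lt hi)
    have h2 : (K-i).factorial = (K-i) * (K-1-i).factorial := by
      rw [show K - i = (K-1-i)+1 by omega, Nat.factorial_succ]
    have h3 : K.factorial = K * (K-1).factorial := by
      rw [show K = (K-1)+1 by omega, Nat.factorial_succ]; simp
    have key : K * (K-1).factorial = K.choose i * i.factorial * ((K-i) * (K-1-i).factorial) := by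
      rw [← h2, h1, h3]
    calc (K:ℝ) * ((K-1).factorial : ℝ) = ((K * (K-1).factorial : ℕ) : ℝ) := by push_cast; ring
      _ = ((K.choose i * i.factorial * ((K-i) * (K-1-i).factorial) : ℕ) : ℝ) := by rw [key]
      _ = _ := by push_cast; ring
  rw [Finset.prod_div_distrib, hKi]
  have hcne : ((K-i:ℕ):ℝ) ≠ 0 := ne_of_gt hc
  field_simp
  refine mul_right_cancel₀ (ne_of_gt hF3) ?_
  linear_combination
    ((K.choose i : ℝ) * poch α (K-i) * ((K-i:ℕ):ℝ) * ((K-1).factorial:ℝ) * ∏ x ∈ Finset.Icc 1 i, (1 + α/((K:ℝ) - (x:ℝ)))) * hN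
    + ((∏ x ∈ Finset.Icc 1 i, (1 - α/(x:ℝ))) * poch α K) * hnat
    - ((K.choose i : ℝ) * (∏ x ∈ Finset.Icc 1 i, (1 - α/(x:ℝ))) * (i.factorial:ℝ) * ((K-i:ℕ):ℝ)) * hD

theorem TbarK_closed_form (α : ℝ) (hα0 : 0 < α) (hα1 : α < 1) (K : ℕ) (hK : 2 ≤ K)
    (Psi : ℝ)
    (hPsi : Psi = ∑ i ∈ Finset.range K, (1 / ((K : ℝ) - (i : ℝ))) *
        ∏ j ∈ Finset.Icc 1 i, ((1 - α / (j : ℝ)) / (1 + α / ((K : ℝ) - (j : ℝ)))))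
    (Tbar : ℝ)
    (hTbar : Tbar = (1 / (1 - α)) *
        (α * (Psi - 1 / (K : ℝ)) +
          (((K : ℝ) - α) / (K : ℝ)) *
            ∏ j ∈ Finset.Icc 1 (K - 1),
              ((1 - α / (j : ℝ)) / (1 + α / ((K : ℝ) - (j : ℝ)))))) :
    Tbar = (α / (1 - α)) *
        (Real.Gamma α * ((K - 1).factorial : ℝ) / Real.Gamma ((K : ℝ) + α) - 1 / (K : ℝ)) := by
  have hpk : (0:ℝ) < poch α K := poch_pos hα0 _
  have hKpos : (0:ℝ) < (K:ℝ) := by positivity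
  have hΓpos : 0 < Real.Gamma α := Real.Gamma_pos_of_pos hα0
  -- Gamma ratio
  have hG : Real.Gamma ((K:ℝ) + α) = Real.Gamma α * poch α K := by
    rw [add_comm]; exact Gamma_poch hα0 K
  -- Psi in closed form
  have hPsi2 : Psi = (∑ i ∈ Finset.range K, (K.choose i : ℝ) * poch (1-α) i * poch α (K-i))
      / ((K:ℝ) * poch α K) := by
    rw [hPsi, Finset.sum_congr rfl (fun i hi => term_eq α hα0 K i hK (Finset.mem_range.mp hi)),
      ← Finset.sum_div]
  -- Vandermonde
  have hV : ∑ i ∈ Finset.range (K+1), (K.choose i : ℝ) * poch (1-α) i * poch α (K-i)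
      = (K.factorial : ℝ) := by
    have := vand (1-α) α K
    rw [show (1-α) + α = 1 by ring, poch_one_eq] at this
    exact this
  have hS : ∑ i ∈ Finset.range K, (K.choose i : ℝ) * poch (1-α) i * poch α (K-i)
      = (K.factorial : ℝ) - poch (1-α) K := by
    have h := hV
    rw [Finset.sum_range_succ] at h
    have : K - K = 0 := by omega
    simp only [this, Nat.choose_self, Nat.cast_one] at h
    have hp0 : poch α 0 = 1 := by simp [poch]
    rw [hp0] at h
    linarith [h]
  -- boundary product
  have hbt := term_eq α hα0 K (K-1) hK (by omega)
  have hc1 : (K:ℝ) - ((K-1 : ℕ):ℝ) = 1 := by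
    push_cast [show 1 ≤ K by omega]; ring
  have hch : (K.choose (K-1) : ℝ) = (K:ℝ) := by
    have : K.choose (K-1) = K := by
      rw [show K - 1 = K - (K-(K-1)) by omega]
      rw [Nat.choose_symm (by omega), show K - (K-1) = 1 by omega, Nat.choose_one_right]
    exact_mod_cast this
  have hp1 : poch α (K-(K-1)) = α := by
    rw [show K-(K-1) = 1 by omega]
    simp [poch]
  rw [hc1, hch, hp1] at hbt
  have hP : ∏ j ∈ Finset.Icc 1 (K - 1), ((1 - α / (j : ℝ)) / (1 + α / ((K : ℝ) - (j : ℝ))))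
      = (K:ℝ) * poch (1-α) (K-1) * α / ((K:ℝ) * poch α K) := by
    have := hbt
    rw [div_one, one_mul] at this
    exact this
  -- relation poch (1-α) K = poch (1-α) (K-1) * (K - α)
  have hpK : poch (1-α) K = poch (1-α) (K-1) * ((K:ℝ) - α) := by
    have h := poch_succ (1-α) (K-1)
    rw [show (K-1)+1 = K by omega] at h
    rw [h, show (((K-1 : ℕ)):ℝ) = (K:ℝ) - 1 by push_cast [show 1 ≤ K by omega]; ring]
    ring
  -- final computation
  have hKfac : (K.factorial : ℝ) = (K:ℝ) * ((K-1).factorial : ℝ) := by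
    have : K.factorial = K * (K-1).factorial := by
      rw [show K = (K-1)+1 by omega, Nat.factorial_succ]; simp
    exact_mod_cast this
  have hGratio : Real.Gamma α * ((K - 1).factorial : ℝ) / Real.Gamma ((K : ℝ) + α)
      = ((K-1).factorial : ℝ) / poch α K := by
    rw [hG]
    field_simp
  rw [hTbar, hPsi2, hS, hP, hGratio, hpK, hKfac]
  have h1α : (1:ℝ) - α ≠ 0 := by linarith
  field_simp
  ring
end

section
/- Let K ≥ 3 and L ≥ 3 be integers, let Λ(j) = ((K-j)((L-1)(j+1)-1))/((j+1)((L-1)(K-j)+1)), and define the normalized hop durations: T̄^(K) = ∑_{i=1}^{K} (1/((L-1)(K-i)+1))·∏_{j=1}^{i-1} Λ(j), and for 1 ≤ k ≤ K-1, T̄^(k) = (1/(K(L-1)))·∑_{i=1}^{k-1} ∏_{j=1}^{i-1} Λ(j) + ((K(L-1)+1)/(K·L·(L-1)))·∏_{j=1}^{k-1} Λ(j) + (1/K)·∏_{j=1}^{k} Λ(j). Then for every 2 ≤ k ≤ K-1, T̄^(k) < T̄^(1) + T̄^(K). -/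
theorem hop_duration_bound (K L : ℕ) (hK : 3 ≤ K) (hL : 3 ≤ L)
    (Λ : ℕ → ℝ)
    (hΛ : ∀ j : ℕ, Λ j = (((K : ℝ) - j) * (((L : ℝ) - 1) * ((j : ℝ) + 1) - 1)) /
        (((j : ℝ) + 1) * (((L : ℝ) - 1) * ((K : ℝ) - (j : ℝ)) + 1)))
    (TbarK : ℝ)
    (hTK : TbarK = ∑ i ∈ Finset.Icc 1 K,
        (1 / (((L : ℝ) - 1) * ((K : ℝ) - (i : ℝ)) + 1)) * ∏ j ∈ Finset.Icc 1 (i - 1), Λ j)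
    (Tbar : ℕ → ℝ)
    (hT : ∀ k : ℕ, 1 ≤ k → k ≤ K - 1 →
        Tbar k = (1 / ((K : ℝ) * ((L : ℝ) - 1))) *
            (∑ i ∈ Finset.Icc 1 (k - 1), ∏ j ∈ Finset.Icc 1 (i - 1), Λ j) +
          (((K : ℝ) * ((L : ℝ) - 1) + 1) / ((K : ℝ) * (L : ℝ) * ((L : ℝ) - 1))) *
            ∏ j ∈ Finset.Icc 1 (k - 1), Λ j +
          (1 / (K : ℝ)) * ∏ j ∈ Finset.Icc 1 k, Λ j) :
    ∀ k : ℕ, 2 ≤ k → k ≤ K - 1 → Tbar k < Tbar 1 + TbarK := by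
  have hKr : (3 : ℝ) ≤ (K : ℝ) := by exact_mod_cast hK
  have hLr : (3 : ℝ) ≤ (L : ℝ) := by exact_mod_cast hL
  -- 0 < Λ j < 1 for 1 ≤ j ≤ K-1
  have hΛ01 : ∀ j : ℕ, 1 ≤ j → j ≤ K - 1 → 0 < Λ j ∧ Λ j < 1 := by
    intro j hj1 hjK
    have hjK' : (j : ℝ) + 1 ≤ (K : ℝ) := by
      have : j + 1 ≤ K := by omega
      exact_mod_cast this
    have hj1' : (1 : ℝ) ≤ (j : ℝ) := by exact_mod_cast hj1
    rw [hΛ j]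
    have hnum : 0 < ((K : ℝ) - j) * (((L : ℝ) - 1) * ((j : ℝ) + 1) - 1) :=
      mul_pos (by linarith) (by nlinarith)
    have hden : 0 < ((j : ℝ) + 1) * (((L : ℝ) - 1) * ((K : ℝ) - j) + 1) :=
      mul_pos (by linarith) (by nlinarith)
    refine ⟨div_pos hnum hden, ?_⟩
    rw [div_lt_one hden]
    nlinarith
  have hmem01 : ∀ n : ℕ, n ≤ K - 1 → ∀ j ∈ Finset.Icc 1 n, 0 < Λ j ∧ Λ j < 1 := by
    intro n hn j hj
    rw [Finset.mem_Icc] at hj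
    exact hΛ01 j hj.1 (le_trans hj.2 hn)
  have prodpos : ∀ n : ℕ, n ≤ K - 1 → 0 < ∏ j ∈ Finset.Icc 1 n, Λ j := by
    intro n hn
    exact Finset.prod_pos fun j hj => (hmem01 n hn j hj).1
  have prodle1 : ∀ n : ℕ, n ≤ K - 1 → ∏ j ∈ Finset.Icc 1 n, Λ j ≤ 1 := by
    intro n hn
    exact Finset.prod_le_one (fun j hj => (hmem01 n hn j hj).1.le)
      (fun j hj => (hmem01 n hn j hj).2.le)
  have hΛ1 := hΛ01 1 le_rfl (by omega)
  have prodleΛ1 : ∀ n : ℕ, 1 ≤ n → n ≤ K - 1 → ∏ j ∈ Finset.Icc 1 n, Λ j ≤ Λ 1 := by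
    intro n h1 h2
    have hmem : 1 ∈ Finset.Icc 1 n := by rw [Finset.mem_Icc]; exact ⟨le_rfl, h1⟩
    rw [← Finset.mul_prod_erase _ _ hmem]
    have hle : ∏ j ∈ (Finset.Icc 1 n).erase 1, Λ j ≤ 1 :=
      Finset.prod_le_one
        (fun j hj => (hmem01 n h2 j (Finset.mem_of_mem_erase hj)).1.le)
        (fun j hj => (hmem01 n h2 j (Finset.mem_of_mem_erase hj)).2.le)
    calc Λ 1 * ∏ j ∈ (Finset.Icc 1 n).erase 1, Λ j ≤ Λ 1 * 1 :=
          mul_le_mul_of_nonneg_left hle hΛ1.1.le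
      _ = Λ 1 := mul_one _
  intro k hk2 hkK
  -- expand Tbar k and Tbar 1
  have hTk := hT k (by omega) hkK
  have hT1 := hT 1 le_rfl (by omega)
  have hIcc0 : Finset.Icc 1 (1 - 1) = (∅ : Finset ℕ) := by decide
  rw [hIcc0] at hT1
  simp only [Finset.sum_empty, Finset.prod_empty, Finset.Icc_self, Finset.prod_singleton,
    mul_zero, zero_add, mul_one] at hT1
  -- bound the sum term by TbarK
  have hsum : (1 / ((K : ℝ) * ((L : ℝ) - 1))) *
      (∑ i ∈ Finset.Icc 1 (k - 1), ∏ j ∈ Finset.Icc 1 (i - 1), Λ j) ≤ TbarK := by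
    rw [hTK, Finset.mul_sum]
    calc ∑ i ∈ Finset.Icc 1 (k - 1),
          1 / ((K : ℝ) * ((L : ℝ) - 1)) * ∏ j ∈ Finset.Icc 1 (i - 1), Λ j
        ≤ ∑ i ∈ Finset.Icc 1 (k - 1),
          1 / (((L : ℝ) - 1) * ((K : ℝ) - (i : ℝ)) + 1) * ∏ j ∈ Finset.Icc 1 (i - 1), Λ j := by
          apply Finset.sum_le_sum
          intro i hi
          rw [Finset.mem_Icc] at hi
          have hi1 : (1 : ℝ) ≤ (i : ℝ) := by exact_mod_cast hi.1
          have hir : (i : ℝ) ≤ (K : ℝ) := by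
            have : i ≤ K := by omega
            exact_mod_cast this
          have hprod : 0 < ∏ j ∈ Finset.Icc 1 (i - 1), Λ j := prodpos (i - 1) (by omega)
          have hd1 : (0 : ℝ) < ((L : ℝ) - 1) * ((K : ℝ) - (i : ℝ)) + 1 := by nlinarith
          have hd2 : ((L : ℝ) - 1) * ((K : ℝ) - (i : ℝ)) + 1 ≤ (K : ℝ) * ((L : ℝ) - 1) := by
            nlinarith
          have h3 : 1 / ((K : ℝ) * ((L : ℝ) - 1)) ≤
              1 / (((L : ℝ) - 1) * ((K : ℝ) - (i : ℝ)) + 1) :=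
            one_div_le_one_div_of_le hd1 hd2
          exact mul_le_mul_of_nonneg_right h3 hprod.le
      _ ≤ ∑ i ∈ Finset.Icc 1 K,
          1 / (((L : ℝ) - 1) * ((K : ℝ) - (i : ℝ)) + 1) * ∏ j ∈ Finset.Icc 1 (i - 1), Λ j := by
          apply Finset.sum_le_sum_of_subset_of_nonneg
          · apply Finset.Icc_subset_Icc_right; omega
          · intro i hi _
            rw [Finset.mem_Icc] at hi
            have hprod : 0 < ∏ j ∈ Finset.Icc 1 (i - 1), Λ j := prodpos (i - 1) (by omega)
            have hir : (i : ℝ) ≤ (K : ℝ) := by exact_mod_cast hi.2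
            have hd1 : (0 : ℝ) < ((L : ℝ) - 1) * ((K : ℝ) - (i : ℝ)) + 1 := by nlinarith
            positivity
  -- bound the middle term
  have hc : (0 : ℝ) < ((K : ℝ) * ((L : ℝ) - 1) + 1) / ((K : ℝ) * (L : ℝ) * ((L : ℝ) - 1)) := by
    have h1 : (0 : ℝ) < (L : ℝ) - 1 := by linarith
    apply div_pos
    · nlinarith
    · exact mul_pos (mul_pos (by linarith) (by linarith)) h1
  have hPk1 : ∏ j ∈ Finset.Icc 1 (k - 1), Λ j < 1 :=
    lt_of_le_of_lt (prodleΛ1 (k - 1) (by omega) (by omega)) hΛ1.2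
  have hmid : (((K : ℝ) * ((L : ℝ) - 1) + 1) / ((K : ℝ) * (L : ℝ) * ((L : ℝ) - 1))) *
      ∏ j ∈ Finset.Icc 1 (k - 1), Λ j <
      ((K : ℝ) * ((L : ℝ) - 1) + 1) / ((K : ℝ) * (L : ℝ) * ((L : ℝ) - 1)) := by
    nlinarith
  -- bound the last term
  have hKpos : (0 : ℝ) < 1 / (K : ℝ) := by positivity
  have hlast : (1 / (K : ℝ)) * ∏ j ∈ Finset.Icc 1 k, Λ j ≤ (1 / (K : ℝ)) * Λ 1 :=
    mul_le_mul_of_nonneg_left (prodleΛ1 k (by omega) hkK) hKpos.le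
  rw [hTk, hT1]
  linarith
end
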